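/- Hölder's inequality for variable exponents: let r : Ω → ℝ be measurable with 1 < r_- ≤ r_+ < ∞ and r'(x) = r(x)/(r(x)−1) its pointwise conjugate. Then for all u ∈ L^{r(·)}(Ω) and v ∈ L^{r'(·)}(Ω), ∫_Ω |u v| dx ≤ (1/r_- + 1/r'_-) ‖u‖_{r(·)} ‖v‖_{r'(·)}. -/

import Mathlib

open MeasureTheory Filter

/-- The modular `ϱ(u) = ∫ |u|^{r(x)} dx` of a variable exponent Lebesgue space. -/
noncomputable def modular {α : Type*} [MeasurableSpace α] (μ : Measure α)
    (r u : α → ℝ) : ℝ :=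
  ∫ x, |u x| ^ (r x) ∂μ

/-- The Luxemburg norm associated to the modular. -/
noncomputable def luxNorm {α : Type*} [MeasurableSpace α] (μ : Measure α)
    (r u : α → ℝ) : ℝ :=
  sInf {l : ℝ | 0 < l ∧ modular μ r (fun x => u x / l) ≤ 1}

/-- Auxiliary: integrability of `|w/a|^{s x}` given integrability of `|w|^{s x}`
and a.e. bounds `1 ≤ s ≤ B`. -/
lemma integrable_abs_div_rpow {α : Type*} [MeasurableSpace α] {μ : Measure α}
    {w s : α → ℝ} (hw : Measurable w) (hs : Measurable s) (B : ℝ)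
    (hs1 : ∀ᵐ x ∂μ, 1 ≤ s x) (hsB : ∀ᵐ x ∂μ, s x ≤ B)
    (hint : Integrable (fun x => |w x| ^ s x) μ) {a : ℝ} (ha : 0 < a) :
    Integrable (fun x => |w x / a| ^ s x) μ := by
  set c : ℝ := 1 / a with hc
  have hc0 : 0 < c := by positivity
  set C : ℝ := max c (c ^ B) with hC
  refine Integrable.mono' (hint.const_mul C) ?_ ?_
  · exact (((hw.div_const a).abs.pow hs)).aestronglyMeasurable
  · filter_upwards [hs1, hsB] with x h1 hB
    have h0 : (0:ℝ) ≤ |w x / a| ^ s x := Real.rpow_nonneg (abs_nonneg _) _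
    rw [Real.norm_of_nonneg h0]
    have habs : |w x / a| = |w x| * c := by
      rw [abs_div, abs_of_pos ha, hc]; ring
    rw [habs, Real.mul_rpow (abs_nonneg _) hc0.le]
    have hcs : c ^ s x ≤ C := by
      rcases le_or_gt 1 c with h | h
      · exact le_max_of_le_right (Real.rpow_le_rpow_of_exponent_le h hB)
      · refine le_max_of_le_left ?_
        have := Real.rpow_le_rpow_of_exponent_ge hc0 h.le h1
        simpa using this
    calc |w x| ^ s x * c ^ s x ≤ |w x| ^ s x * C :=
          mul_le_mul_of_nonneg_left hcs (Real.rpow_nonneg (abs_nonneg _) _)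
      _ = C * |w x| ^ s x := mul_comm _ _

/-- Auxiliary: the Luxemburg set is nonempty under an integrability assumption. -/
lemma luxSet_nonempty {α : Type*} [MeasurableSpace α] {μ : Measure α}
    {w s : α → ℝ} (hs1 : ∀ᵐ x ∂μ, 1 ≤ s x)
    (hint : Integrable (fun x => |w x| ^ s x) μ) :
    ∃ l : ℝ, 0 < l ∧ modular μ s (fun x => w x / l) ≤ 1 := by
  set I : ℝ := ∫ x, |w x| ^ s x ∂μ with hI
  have hI0 : 0 ≤ I := integral_nonneg fun x => Real.rpow_nonneg (abs_nonneg _) _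
  refine ⟨I + 1, by positivity, ?_⟩
  have hl0 : (0:ℝ) < I + 1 := by linarith
  have key : (∫ x, |w x / (I + 1)| ^ s x ∂μ) ≤ ∫ x, |w x| ^ s x / (I + 1) ∂μ := by
    refine integral_mono_of_nonneg
      (Eventually.of_forall fun x => Real.rpow_nonneg (abs_nonneg _) _)
      (hint.div_const _) ?_
    filter_upwards [hs1] with x h1
    have habs : |w x / (I + 1)| = |w x| * (1 / (I + 1)) := by
      rw [abs_div, abs_of_pos hl0]; ring
    rw [habs, Real.mul_rpow (abs_nonneg _) (by positivity)]
    have hle : (1 / (I + 1)) ^ s x ≤ 1 / (I + 1) := by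
      have h2 : (1:ℝ) / (I + 1) ≤ 1 := by
        rw [div_le_one hl0]; linarith
      have := Real.rpow_le_rpow_of_exponent_ge (by positivity) h2 h1
      simpa using this
    calc |w x| ^ s x * (1 / (I + 1)) ^ s x
        ≤ |w x| ^ s x * (1 / (I + 1)) :=
          mul_le_mul_of_nonneg_left hle (Real.rpow_nonneg (abs_nonneg _) _)
      _ = |w x| ^ s x / (I + 1) := by ring
  have : modular μ s (fun x => w x / (I + 1)) ≤ I / (I + 1) := by
    simpa [modular, integral_div] using key
  refine this.trans ?_
  rw [div_le_one hl0]; linarith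

/-- Hölder's inequality for variable exponent Lebesgue spaces:
`∫ |uv| ≤ (1/r₋ + 1/r'₋) ‖u‖_{r(·)} ‖v‖_{r'(·)}`, where `r'(x) = r(x)/(r(x)-1)`
is the pointwise conjugate exponent. -/
theorem variable_exponent_holder {α : Type*} [MeasurableSpace α]
    (μ : Measure α) [IsFiniteMeasure μ]
    (r : α → ℝ) (hr : Measurable r) (M : ℝ)
    (hr₁ : 1 < essInf r μ) (hr₂ : ∀ᵐ x ∂μ, r x ≤ M)
    (u v : α → ℝ) (hu : Measurable u) (hv : Measurable v)
    (humem : Integrable (fun x => |u x| ^ (r x)) μ)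
    (hvmem : Integrable (fun x => |v x| ^ (r x / (r x - 1))) μ) :
    ∫ x, |u x * v x| ∂μ ≤
      (1 / essInf r μ + 1 / essInf (fun x => r x / (r x - 1)) μ) *
        (luxNorm μ r u * luxNorm μ (fun x => r x / (r x - 1)) v) := by
  rcases eq_or_ne μ 0 with hμ | hμ
  · subst hμ
    have hset : ∀ (p w : α → ℝ), luxNorm (0 : Measure α) p w = 0 := by
      intro p w
      have : {l : ℝ | 0 < l ∧ modular (0 : Measure α) p (fun x => w x / l) ≤ 1}
          = Set.Ioi 0 := by
        ext l
        simp [modular, Set.mem_Ioi]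
      rw [luxNorm, this, csInf_Ioi]
    simp [hset]
  · have _hne : NeZero μ := ⟨hμ⟩
    set r' : α → ℝ := fun x => r x / (r x - 1) with hr'def
    set m : ℝ := essInf r μ with hm
    have hbdd : IsBoundedUnder (· ≥ ·) (ae μ) r := by
      by_contra h
      have hempty : {a : ℝ | ∀ᵐ x ∂μ, a ≤ r x} = ∅ := by
        ext a
        simp only [Set.mem_setOf_eq, Set.mem_empty_iff_false, iff_false]
        intro ha
        exact h ⟨a, ha⟩
      have h0 : essInf r μ = 0 := by
        rw [essInf, liminf_eq, hempty, Real.sSup_empty]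
      rw [h0] at hm; linarith
    have hm1 : 1 < m := hr₁
    have ham : ∀ᵐ x ∂μ, m ≤ r x := ae_essInf_le hbdd
    have h1r : ∀ᵐ x ∂μ, 1 < r x := ae_lt_of_lt_essInf hr₁ hbdd
    -- bounds for r'
    have hr'lb : ∀ᵐ x ∂μ, 1 ≤ r' x := by
      filter_upwards [h1r] with x h1
      rw [hr'def]
      rw [le_div_iff₀ (by linarith)]
      linarith
    have hr'ub : ∀ᵐ x ∂μ, r' x ≤ m / (m - 1) := by
      filter_upwards [h1r, ham] with x h1 h2
      rw [hr'def]
      rw [div_le_div_iff₀ (by linarith) (by linarith)]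
      nlinarith
    have hbdd' : IsBoundedUnder (· ≥ ·) (ae μ) r' := ⟨1, hr'lb⟩
    set m' : ℝ := essInf r' μ with hm'
    have ham' : ∀ᵐ x ∂μ, m' ≤ r' x := ae_essInf_le hbdd'
    have hm'1 : 1 ≤ m' := by
      refine le_liminf_of_le ?_ hr'lb
      exact isCoboundedUnder_ge_of_eventually_le (ae μ) hr'ub
    have hm'0 : 0 < m' := by linarith
    have hm0 : 0 < m := by linarith
    set C : ℝ := 1 / m + 1 / m' with hCdef
    have hC0 : 0 < C := by positivity
    -- the Luxemburg sets
    set Su := {l : ℝ | 0 < l ∧ modular μ r (fun x => u x / l) ≤ 1} with hSu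
    set Sv := {l : ℝ | 0 < l ∧ modular μ r' (fun x => v x / l) ≤ 1} with hSv
    have h1r' : ∀ᵐ x ∂μ, 1 ≤ r x := by filter_upwards [h1r] with x h; linarith
    have hSune : Su.Nonempty := luxSet_nonempty h1r' humem
    have hSvne : Sv.Nonempty := luxSet_nonempty hr'lb hvmem
    have hr'meas : Measurable r' := hr.div (hr.sub measurable_const)
    -- key inequality
    have key : ∀ a ∈ Su, ∀ b ∈ Sv, (∫ x, |u x * v x| ∂μ) ≤ C * (a * b) := by
      rintro a ⟨ha0, hamod⟩ b ⟨hb0, hbmod⟩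
      have Iu : Integrable (fun x => |u x / a| ^ r x) μ :=
        integrable_abs_div_rpow hu hr M h1r' hr₂ humem ha0
      have Iv : Integrable (fun x => |v x / b| ^ r' x) μ :=
        integrable_abs_div_rpow hv hr'meas (m / (m - 1)) hr'lb hr'ub hvmem hb0
      have hF : Integrable
          (fun x => a * b * (|u x / a| ^ r x / m + |v x / b| ^ r' x / m')) μ :=
        ((Iu.div_const m).add (Iv.div_const m')).const_mul (a * b)
      have hpt : ∀ᵐ x ∂μ, |u x * v x|
          ≤ a * b * (|u x / a| ^ r x / m + |v x / b| ^ r' x / m') := by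
        filter_upwards [h1r, ham, ham'] with x h1 h2 h3
        have hconj : (r x).HolderConjugate (r' x) :=
          Real.HolderConjugate.conjExponent h1
        have hy := Real.young_inequality_of_nonneg
          (div_nonneg (abs_nonneg (u x)) ha0.le)
          (div_nonneg (abs_nonneg (v x)) hb0.le) hconj
        have hua : |u x / a| = |u x| / a := by rw [abs_div, abs_of_pos ha0]
        have hvb : |v x / b| = |v x| / b := by rw [abs_div, abs_of_pos hb0]
        have h4 : (|u x| / a) ^ r x / r x ≤ |u x / a| ^ r x / m := by
          rw [hua]; gcongr
        have h5 : (|v x| / b) ^ r' x / r' x ≤ |v x / b| ^ r' x / m' := by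
          rw [hvb]; gcongr
        have habmul : |u x * v x| = a * b * (|u x| / a * (|v x| / b)) := by
          rw [abs_mul]; field_simp
        rw [habmul]
        have hab : (0:ℝ) ≤ a * b := by positivity
        calc a * b * (|u x| / a * (|v x| / b))
            ≤ a * b * ((|u x| / a) ^ r x / r x + (|v x| / b) ^ r' x / r' x) :=
              mul_le_mul_of_nonneg_left hy hab
          _ ≤ a * b * (|u x / a| ^ r x / m + |v x / b| ^ r' x / m') :=
              mul_le_mul_of_nonneg_left (add_le_add h4 h5) hab
      have hInt : (∫ x, |u x * v x| ∂μ)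
          ≤ ∫ x, a * b * (|u x / a| ^ r x / m + |v x / b| ^ r' x / m') ∂μ :=
        integral_mono_of_nonneg
          (Eventually.of_forall fun x => abs_nonneg _) hF hpt
      have hcalc : (∫ x, a * b * (|u x / a| ^ r x / m + |v x / b| ^ r' x / m') ∂μ)
          = a * b * ((∫ x, |u x / a| ^ r x ∂μ) / m + (∫ x, |v x / b| ^ r' x ∂μ) / m') := by
        rw [integral_const_mul, integral_add (Iu.div_const m) (Iv.div_const m'),
          integral_div, integral_div]
      have hmodu : (∫ x, |u x / a| ^ r x ∂μ) ≤ 1 := hamod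
      have hmodv : (∫ x, |v x / b| ^ r' x ∂μ) ≤ 1 := hbmod
      have hfin : a * b * ((∫ x, |u x / a| ^ r x ∂μ) / m + (∫ x, |v x / b| ^ r' x ∂μ) / m')
          ≤ a * b * (1 / m + 1 / m') := by
        gcongr
      calc (∫ x, |u x * v x| ∂μ)
          ≤ a * b * ((∫ x, |u x / a| ^ r x ∂μ) / m + (∫ x, |v x / b| ^ r' x ∂μ) / m') := by
            rw [← hcalc]; exact hInt
        _ ≤ a * b * (1 / m + 1 / m') := hfin
        _ = C * (a * b) := by rw [hCdef]; ring
    -- assemble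
    have hNv0 : 0 ≤ sInf Sv := le_csInf hSvne fun b hb => hb.1.le
    have step1 : ∀ a ∈ Su, (∫ x, |u x * v x| ∂μ) ≤ C * a * sInf Sv := by
      intro a ha
      have hCa : 0 < C * a := mul_pos hC0 ha.1
      have hlb : ∀ b ∈ Sv, (∫ x, |u x * v x| ∂μ) / (C * a) ≤ b := by
        intro b hb
        rw [div_le_iff₀ hCa]
        calc (∫ x, |u x * v x| ∂μ) ≤ C * (a * b) := key a ha b hb
          _ = b * (C * a) := by ring
      have h := le_csInf hSvne hlb
      rw [div_le_iff₀ hCa] at h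
      calc (∫ x, |u x * v x| ∂μ) ≤ sInf Sv * (C * a) := h
        _ = C * a * sInf Sv := by ring
    have hgoal : (∫ x, |u x * v x| ∂μ) ≤ C * (sInf Su * sInf Sv) := by
      rcases hNv0.lt_or_eq with hpos | hzero
      · have hCN : 0 < C * sInf Sv := mul_pos hC0 hpos
        have hlb : ∀ a ∈ Su, (∫ x, |u x * v x| ∂μ) / (C * sInf Sv) ≤ a := by
          intro a ha
          rw [div_le_iff₀ hCN]
          calc (∫ x, |u x * v x| ∂μ) ≤ C * a * sInf Sv := step1 a ha
            _ = a * (C * sInf Sv) := by ring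
        have h := le_csInf hSune hlb
        rw [div_le_iff₀ hCN] at h
        calc (∫ x, |u x * v x| ∂μ) ≤ sInf Su * (C * sInf Sv) := h
          _ = C * (sInf Su * sInf Sv) := by ring
      · obtain ⟨a, ha⟩ := hSune
        have h := step1 a ha
        rw [← hzero, mul_zero] at h
        calc (∫ x, |u x * v x| ∂μ) ≤ 0 := h
          _ = C * (sInf Su * sInf Sv) := by rw [← hzero]; ring
    exact hgoal
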